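/- Under Assumptions 1 and 2 (minorisation for the ideal MH kernel with constant $\delta$ and density $\nu$, and weights bounded above by $\overline{w}$ with $\mathbb{E}[W]=c\le\overline{w}$), the pseudo-marginal kernel $\tilde P$ on $\Theta\times[0,\overline{w}]$ with acceptance probability $\alpha_{PM}$ satisfies the whole-space minorisation $\tilde P([\theta,w],\cdot) \ge \tilde\delta\,\tilde\nu(\cdot)$ with $\tilde\delta = c\delta/\overline{w} \le \delta < 1$, where $\tilde\nu$ has density $\tilde\nu(\theta,w) = \nu(\theta)\,c^{-1}q_\theta(w)w$. -/

import Mathlib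

open MeasureTheory

/-- Minorisation of the pseudo-marginal delayed-acceptance fixed kernel: under
the minorisation Assumption 1 for the ideal MH kernel and bounded weights with
mean `c ≤ w̄` (Assumption 2), the pseudo-marginal kernel `P̃` on `Θ × (0, w̄]`
satisfies the whole-space minorisation `P̃((θ,w),·) ≥ δ̃ ν̃(·)` with
`δ̃ = cδ/w̄ ≤ δ < 1`, where `ν̃(θ,w) = ν(θ) c⁻¹ q_θ(w) w`. -/
theorem stmt_11 {Θ : Type*} [MeasurableSpace Θ] (lam : Measure Θ) [SigmaFinite lam]
    (π : Θ → ℝ) (q : Θ → Θ → ℝ) (qw : Θ → ℝ → ℝ) (νd : Θ → ℝ)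
    (c wbar δ : ℝ) (hc : 0 < c) (hwbar : 0 < wbar) (hδ : δ ∈ Set.Ioo (0 : ℝ) 1)
    (hπ : ∀ θ, 0 < π θ) (hqpos : ∀ θ θs, 0 < q θ θs)
    (hq1 : ∀ θ, ∫ θs, q θ θs ∂lam = 1)
    (hqw0 : ∀ θ w, 0 ≤ qw θ w)
    (hqwsupp : ∀ θ w, w ∉ Set.Ioc (0 : ℝ) wbar → qw θ w = 0)
    (hqw1 : ∀ θ, ∫ w, qw θ w = 1)
    (hqwmean : ∀ θ, ∫ w, w * qw θ w = c)
    (hν0 : ∀ θs, 0 ≤ νd θs) (hν1 : ∫ θs, νd θs ∂lam = 1)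
    -- the ideal MH acceptance probability and Assumption 1
    (αMH : Θ → Θ → ℝ)
    (hαMH : ∀ θ θs, αMH θ θs = min 1 (π θs * q θs θ / (π θ * q θ θs)))
    (hminor : ∀ θ θs, δ * νd θs ≤ q θ θs * αMH θ θs)
    -- the pseudo-marginal acceptance probability
    (αPM : Θ → ℝ → Θ → ℝ → ℝ)
    (hαPM : ∀ θ w θs ws, αPM θ w θs ws =
      min 1 (π θs * q θs θ * ws / (π θ * q θ θs * w)))
    -- the pseudo-marginal kernel
    (αbar : Θ → ℝ → ℝ)
    (hαbar : ∀ θ w, αbar θ w = ∫ θs, (∫ ws, q θ θs * qw θs ws * αPM θ w θs ws) ∂lam)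
    (Pt : Θ × ℝ → Set (Θ × ℝ) → ℝ)
    (hPt : ∀ p A, Pt p A =
      (1 - αbar p.1 p.2) * Set.indicator A (fun _ => (1 : ℝ)) p +
        ∫ r in A, q p.1 r.1 * qw r.1 r.2 * αPM p.1 p.2 r.1 r.2 ∂(lam.prod volume))
    (hint : ∀ θ w, Integrable
      (fun r : Θ × ℝ => q θ r.1 * qw r.1 r.2 * αPM θ w r.1 r.2) (lam.prod volume))
    (νt : Θ × ℝ → ℝ) (hνt : ∀ r, νt r = νd r.1 * c⁻¹ * qw r.1 r.2 * r.2) :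
    c * δ / wbar ≤ δ ∧
    ∀ θ : Θ, ∀ w : ℝ, w ∈ Set.Ioc 0 wbar → ∀ A : Set (Θ × ℝ), MeasurableSet A →
      (c * δ / wbar) * ∫ r in A, νt r ∂(lam.prod volume) ≤ Pt (θ, w) A := by
  have hδ0 : 0 < δ := hδ.1
  -- nonemptiness of Θ
  rcases isEmpty_or_nonempty Θ with hE | hNE
  · exfalso
    have : lam = 0 := by
      ext s hs
      have : s = ∅ := Set.eq_empty_of_isEmpty s
      simp [this]
    rw [this] at hν1
    simp at hν1
  obtain ⟨θ0⟩ := hNE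
  -- integrability facts from normalizations
  have hqwInt : ∀ θ, Integrable (qw θ) := by
    intro θ
    by_contra h
    have := hqw1 θ
    rw [integral_undef h] at this
    exact zero_ne_one this
  have hwqwInt : ∀ θ, Integrable (fun w => w * qw θ w) := by
    intro θ
    by_contra h
    have := hqwmean θ
    rw [integral_undef h] at this
    exact hc.ne this
  have hqInt : ∀ θ, Integrable (q θ) lam := by
    intro θ
    by_contra h
    have := hq1 θ
    rw [integral_undef h] at this
    exact zero_ne_one this
  -- c ≤ wbar
  have hcw : c ≤ wbar := by
    have hmono : ∀ ws, ws * qw θ0 ws ≤ wbar * qw θ0 ws := by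
      intro ws
      by_cases hws : ws ∈ Set.Ioc (0 : ℝ) wbar
      · exact mul_le_mul_of_nonneg_right hws.2 (hqw0 θ0 ws)
      · simp [hqwsupp θ0 ws hws]
    have := integral_mono (hwqwInt θ0) ((hqwInt θ0).const_mul wbar) hmono
    rwa [hqwmean θ0, integral_const_mul, hqw1 θ0, mul_one] at this
  have hfirst : c * δ / wbar ≤ δ := by
    rw [div_le_iff₀ hwbar]
    calc c * δ ≤ wbar * δ := by nlinarith
    _ = δ * wbar := by ring
  refine ⟨hfirst, ?_⟩
  intro θ w hw A hA
  -- pointwise bounds on the kernel integrand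
  have hαPMle1 : ∀ θ w θs ws, αPM θ w θs ws ≤ 1 := by
    intro θ w θs ws; rw [hαPM]; exact min_le_left _ _
  have fnn : ∀ θs ws,
      0 ≤ q θ θs * qw θs ws * αPM θ w θs ws := by
    intro θs ws
    by_cases hws : ws ∈ Set.Ioc (0 : ℝ) wbar
    · refine mul_nonneg (mul_nonneg (hqpos θ θs).le (hqw0 θs ws)) ?_
      rw [hαPM]
      have hw0 : 0 < w := hw.1
      have : 0 < π θs * q θs θ * ws / (π θ * q θ θs * w) := by
        have := hπ θ; have := hπ θs; have := hqpos θ θs; have := hqpos θs θ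
        have := hws.1
        positivity
      exact le_min one_pos.le this.le
    · simp [hqwsupp θs ws hws]
  have fle : ∀ θs ws,
      q θ θs * qw θs ws * αPM θ w θs ws ≤ q θ θs * qw θs ws := by
    intro θs ws
    by_cases hws : ws ∈ Set.Ioc (0 : ℝ) wbar
    · calc q θ θs * qw θs ws * αPM θ w θs ws
          ≤ q θ θs * qw θs ws * 1 :=
            mul_le_mul_of_nonneg_left (hαPMle1 θ w θs ws)
              (mul_nonneg (hqpos θ θs).le (hqw0 θs ws))
      _ = q θ θs * qw θs ws := mul_one _
    · simp [hqwsupp θs ws hws]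
  -- key minorisation pointwise bound
  have key : ∀ θs ws,
      δ / wbar * (νd θs * qw θs ws * ws) ≤ q θ θs * qw θs ws * αPM θ w θs ws := by
    intro θs ws
    by_cases hws : ws ∈ Set.Ioc (0 : ℝ) wbar
    · have hq0 : 0 < q θ θs := hqpos θ θs
      have hqs0 : 0 < q θs θ := hqpos θs θ
      have hπ0 : 0 < π θ := hπ θ
      have hπs0 : 0 < π θs := hπ θs
      have hw0 : 0 < w := hw.1
      have hws0 : 0 < ws := hws.1
      -- αPM ≥ (ws/wbar) * αMH
      have hstep : ws / wbar * αMH θ θs ≤ αPM θ w θs ws := by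
        rw [hαMH, hαPM]
        set r : ℝ := π θs * q θs θ / (π θ * q θ θs) with hr
        have hr0 : 0 ≤ r := by positivity
        have h1 : ws / wbar * min 1 r ≤ 1 := by
          have h2 : ws / wbar ≤ 1 := (div_le_one hwbar).2 hws.2
          have h3 : min 1 r ≤ 1 := min_le_left _ _
          have hmin0 : 0 ≤ min 1 r := le_min one_pos.le hr0
          have h2' : 0 ≤ ws / wbar := by positivity
          nlinarith
        have h4 : ws / wbar * min 1 r ≤ π θs * q θs θ * ws / (π θ * q θ θs * w) := by
          have h5 : ws / wbar * min 1 r ≤ ws / wbar * r :=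
            mul_le_mul_of_nonneg_left (min_le_right _ _) (by positivity)
          have h6 : ws / wbar * r ≤ ws / w * r := by
            have : ws / wbar ≤ ws / w := by
              apply div_le_div_of_nonneg_left hws0.le hw0 hw.2
            exact mul_le_mul_of_nonneg_right this hr0
          have h7 : ws / w * r = π θs * q θs θ * ws / (π θ * q θ θs * w) := by
            field_simp [hr]
            rw [hr, div_mul_eq_mul_div, div_mul_eq_mul_div, div_eq_iff (by positivity)]; ring
          linarith
        exact le_min h1 h4
      have hmin := hminor θ θs
      have h8 : δ / wbar * (νd θs * ws) ≤ q θ θs * (ws / wbar * αMH θ θs) := by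
        have h9 : ws / wbar * (δ * νd θs) ≤ ws / wbar * (q θ θs * αMH θ θs) :=
          mul_le_mul_of_nonneg_left hmin (by positivity)
        calc δ / wbar * (νd θs * ws) = ws / wbar * (δ * νd θs) := by ring
        _ ≤ ws / wbar * (q θ θs * αMH θ θs) := h9
        _ = q θ θs * (ws / wbar * αMH θ θs) := by ring
      have h10 : q θ θs * (ws / wbar * αMH θ θs) ≤ q θ θs * αPM θ w θs ws :=
        mul_le_mul_of_nonneg_left hstep hq0.le
      have h11 : δ / wbar * (νd θs * ws) ≤ q θ θs * αPM θ w θs ws := le_trans h8 h10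
      calc δ / wbar * (νd θs * qw θs ws * ws)
          = δ / wbar * (νd θs * ws) * qw θs ws := by ring
      _ ≤ q θ θs * αPM θ w θs ws * qw θs ws :=
          mul_le_mul_of_nonneg_right h11 (hqw0 θs ws)
      _ = q θ θs * qw θs ws * αPM θ w θs ws := by ring
    · simp [hqwsupp θs ws hws]
  -- αbar θ w ≤ 1
  have habar : αbar θ w ≤ 1 := by
    rw [hαbar]
    have hInt := hint θ w
    have hslice := hInt.prod_right_ae
    have houter := hInt.integral_prod_left
    have hbound : ∀ᵐ θs ∂lam,
        (∫ ws, q θ θs * qw θs ws * αPM θ w θs ws) ≤ q θ θs := by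
      filter_upwards [hslice] with θs hsl
      have := integral_mono hsl ((hqwInt θs).const_mul (q θ θs)) (fle θs)
      rwa [integral_const_mul, hqw1 θs, mul_one] at this
    have := integral_mono_ae houter (hqInt θ) hbound
    rwa [hq1 θ] at this
  rw [hPt]
  have hind : 0 ≤ (1 - αbar θ w) * Set.indicator A (fun _ => (1:ℝ)) (θ, w) := by
    apply mul_nonneg (by linarith)
    exact Set.indicator_nonneg (fun _ _ => one_pos.le) _
  have hRnn : 0 ≤ ∫ r in A, q θ r.1 * qw r.1 r.2 * αPM θ w r.1 r.2 ∂(lam.prod volume) :=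
    integral_nonneg fun r => fnn r.1 r.2
  have hmain : (c * δ / wbar) * (∫ r in A, νt r ∂(lam.prod volume)) ≤
      ∫ r in A, q θ r.1 * qw r.1 r.2 * αPM θ w r.1 r.2 ∂(lam.prod volume) := by
    by_cases hI : Integrable νt ((lam.prod volume).restrict A)
    · have hpt : ∀ r : Θ × ℝ, (c * δ / wbar) * νt r ≤
          q θ r.1 * qw r.1 r.2 * αPM θ w r.1 r.2 := by
        intro r
        have heq : (c * δ / wbar) * νt r = δ / wbar * (νd r.1 * qw r.1 r.2 * r.2) := by
          rw [hνt]
          field_simp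
        rw [heq]
        exact key r.1 r.2
      have := integral_mono (hI.const_mul (c * δ / wbar)) ((hint θ w).restrict) hpt
      rwa [integral_const_mul] at this
    · rw [integral_undef hI, mul_zero]
      exact hRnn
  simp only []
  linarith
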